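/- Let k ≥ 1 and let s_1, …, s_k be pairwise disjoint finite arithmetic progressions of integers whose union is a set X. Let s be a finite arithmetic progression with s ⊆ X, and for each i ∈ {1, …, k} let t_i = s ∩ s_i. Suppose that for some i the set t_i has at least k+1 elements. Then for any two elements x < y of t_i that are consecutive in t_i (i.e., no element of t_i lies strictly between x and y), the number of elements of s lying strictly between x and y is at most 2^(k−1) − 1. -/

import Mathlib

def IsFinAP (S : Set ℤ) : Prop :=
  ∃ (a d : ℤ) (m : ℕ), 1 ≤ m ∧ S = {x : ℤ | ∃ i : ℕ, i < m ∧ x = a + (i : ℤ) * d}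

/-- Auxiliary: the finite AP as a set. -/
def APset (β φ : ℤ) (M : ℕ) : Set ℤ := {x : ℤ | ∃ i : ℕ, i < M ∧ x = β + (i : ℤ) * φ}

lemma APset_finite (β φ : ℤ) (M : ℕ) : (APset β φ M).Finite := by
  have : APset β φ M = (fun i : ℕ => β + (i : ℤ) * φ) '' {i | i < M} := by
    ext z; simp [APset, Set.mem_image, eq_comm]
  rw [this]
  exact (Set.finite_lt_nat M).image _

lemma mem_APset_iff {β φ : ℤ} (hφ : 0 < φ) {M : ℕ} {z : ℤ} :
    z ∈ APset β φ M ↔ (φ ∣ z - β ∧ β ≤ z ∧ z ≤ β + ((M : ℤ) - 1) * φ) := by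
  constructor
  · rintro ⟨i, hi, rfl⟩
    refine ⟨⟨i, by ring⟩, le_add_of_nonneg_right (by positivity), ?_⟩
    have : (i : ℤ) ≤ (M : ℤ) - 1 := by omega
    nlinarith
  · rintro ⟨⟨c, hc⟩, h1, h2⟩
    have hc' : z = β + c * φ := by linarith [hc]
    have hc0 : 0 ≤ c := by nlinarith
    have hcM : c ≤ (M : ℤ) - 1 := by nlinarith
    refine ⟨c.toNat, ?_, ?_⟩
    · omega
    · rw [Int.toNat_of_nonneg hc0]; exact hc'

/-- normalization: every finite AP has a representation with positive difference. -/
lemma isFinAP_norm {T : Set ℤ} (hT : IsFinAP T) :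
    ∃ β φ : ℤ, ∃ M : ℕ, 0 < φ ∧ 1 ≤ M ∧ T = APset β φ M := by
  obtain ⟨a, d, m, hm, rfl⟩ := hT
  rcases lt_trichotomy d 0 with hd | hd | hd
  · refine ⟨a + ((m : ℤ) - 1) * d, -d, m, by omega, hm, ?_⟩
    ext z
    constructor
    · rintro ⟨i, hi, rfl⟩
      refine ⟨m - 1 - i, by omega, ?_⟩
      have : ((m - 1 - i : ℕ) : ℤ) = (m : ℤ) - 1 - i := by omega
      rw [this]; ring
    · rintro ⟨i, hi, rfl⟩
      refine ⟨m - 1 - i, by omega, ?_⟩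
      have : ((m - 1 - i : ℕ) : ℤ) = (m : ℤ) - 1 - i := by omega
      rw [this]; ring
  · refine ⟨a, 1, 1, one_pos, le_refl 1, ?_⟩
    subst hd
    ext z
    constructor
    · rintro ⟨i, hi, rfl⟩; exact ⟨0, by omega, by simp⟩
    · rintro ⟨i, hi, rfl⟩
      refine ⟨0, by omega, by simp; omega⟩
  · exact ⟨a, d, m, hd, hm, rfl⟩

/-- a congruence class intersected with an interval is a finite AP. -/
lemma congr_interval_AP (L z₀ lo hi : ℤ) (hL : 0 < L)
    (hne : {z : ℤ | L ∣ z - z₀ ∧ lo ≤ z ∧ z ≤ hi}.Nonempty) :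
    ∃ β : ℤ, ∃ M : ℕ, 1 ≤ M ∧ {z : ℤ | L ∣ z - z₀ ∧ lo ≤ z ∧ z ≤ hi} = APset β L M := by
  set T := {z : ℤ | L ∣ z - z₀ ∧ lo ≤ z ∧ z ≤ hi} with hTdef
  obtain ⟨μ, hμ, hmin⟩ := Int.exists_least_of_bdd (P := fun z => z ∈ T)
    ⟨lo, fun z hz => hz.2.1⟩ hne
  obtain ⟨hμdvd, hμlo, hμhi⟩ := hμ
  refine ⟨μ, ((hi - μ) / L).toNat + 1, by omega, ?_⟩
  have hq0 : 0 ≤ (hi - μ) / L := Int.ediv_nonneg (by linarith) hL.le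
  ext z
  constructor
  · intro hz
    obtain ⟨hdvd, hlo, hhi⟩ := hz
    have hzμ : L ∣ z - μ := by
      have := dvd_sub hdvd hμdvd
      simpa using this
    obtain ⟨c, hc⟩ := hzμ
    have hzc : z = μ + c * L := by linarith
    have hμz : μ ≤ z := hmin z ⟨hdvd, hlo, hhi⟩
    have hc0 : 0 ≤ c := by nlinarith
    have hcq : c ≤ (hi - μ) / L := by
      have h1 : c * L ≤ hi - μ := by linarith
      have := Int.le_ediv_iff_mul_le hL (a := c) (b := hi - μ)
      exact this.mpr h1
    refine ⟨c.toNat, by omega, by rw [Int.toNat_of_nonneg hc0]; exact hzc⟩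
  · rintro ⟨i, hi', rfl⟩
    have hiq : (i : ℤ) ≤ (hi - μ) / L := by omega
    have hub : (i : ℤ) * L ≤ hi - μ := by
      calc (i : ℤ) * L ≤ ((hi - μ) / L) * L := by
            exact mul_le_mul_of_nonneg_right hiq hL.le
        _ ≤ hi - μ := Int.ediv_mul_le _ hL.ne'
    refine ⟨?_, by { have h0 : (0:ℤ) ≤ (i:ℤ)*L := by positivity
                     linarith }, by linarith⟩
    have : μ + (i : ℤ) * L - z₀ = (μ - z₀) + (i : ℤ) * L := by ring
    rw [this]
    exact dvd_add hμdvd ⟨i, by ring⟩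
/-- intersection of a (positively normalized) finite AP with a finite AP, if
nonempty, is a finite AP whose difference is a positive multiple of `d`. -/
lemma inter_AP_norm {a d : ℤ} {m : ℕ} (hd : 0 < d) {U : Set ℤ} (hU : IsFinAP U)
    (hne : (APset a d m ∩ U).Nonempty) :
    ∃ b φ : ℤ, ∃ l : ℕ, 0 < φ ∧ d ∣ φ ∧ 1 ≤ l ∧ APset a d m ∩ U = APset b φ l := by
  obtain ⟨c, e, lU, he, hlU, rfl⟩ := isFinAP_norm hU
  obtain ⟨z₀, hz₀⟩ := hne
  set L : ℤ := (Int.lcm d e : ℤ) with hLdef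
  have hL0 : 0 < L := by
    have : Int.lcm d e ≠ 0 := by
      rw [Int.lcm]
      exact Nat.lcm_ne_zero (by simpa using hd.ne') (by simpa using he.ne')
    positivity
  have hdL : d ∣ L := Int.dvd_lcm_left d e
  have heL : e ∣ L := Int.dvd_lcm_right d e
  have hz₀S := (mem_APset_iff hd).mp hz₀.1
  have hz₀U := (mem_APset_iff he).mp hz₀.2
  have key : APset a d m ∩ APset c e lU =
      {z : ℤ | L ∣ z - z₀ ∧ max a c ≤ z ∧
        z ≤ min (a + ((m : ℤ) - 1) * d) (c + ((lU : ℤ) - 1) * e)} := by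
    ext z
    simp only [Set.mem_inter_iff, mem_APset_iff hd, mem_APset_iff he, Set.mem_setOf_eq,
      max_le_iff, le_min_iff]
    constructor
    · rintro ⟨⟨hda, ha1, ha2⟩, ⟨hec, hc1, hc2⟩⟩
      refine ⟨?_, ⟨ha1, hc1⟩, ⟨ha2, hc2⟩⟩
      rw [hLdef, Int.coe_lcm]
      refine lcm_dvd ?_ ?_
      · have : z - z₀ = (z - a) - (z₀ - a) := by ring
        rw [this]; exact dvd_sub hda hz₀S.1
      · have : z - z₀ = (z - c) - (z₀ - c) := by ring
        rw [this]; exact dvd_sub hec hz₀U.1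
    · rintro ⟨hLz, ⟨ha1, hc1⟩, ⟨ha2, hc2⟩⟩
      have hdz : d ∣ z - z₀ := dvd_trans hdL hLz
      have hez : e ∣ z - z₀ := dvd_trans heL hLz
      constructor
      · refine ⟨?_, ha1, ha2⟩
        have : z - a = (z - z₀) + (z₀ - a) := by ring
        rw [this]; exact dvd_add hdz hz₀S.1
      · refine ⟨?_, hc1, hc2⟩
        have : z - c = (z - z₀) + (z₀ - c) := by ring
        rw [this]; exact dvd_add hez hz₀U.1
  have hne' : {z : ℤ | L ∣ z - z₀ ∧ max a c ≤ z ∧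
      z ≤ min (a + ((m : ℤ) - 1) * d) (c + ((lU : ℤ) - 1) * e)}.Nonempty := by
    rw [← key]; exact ⟨z₀, hz₀⟩
  obtain ⟨β, M, hM, hrep⟩ := congr_interval_AP L z₀ _ _ hL0 hne'
  exact ⟨β, L, M, hL0, hdL, hM, by rw [key, hrep]⟩

lemma ncard_APset {β φ : ℤ} (hφ : 0 < φ) (M : ℕ) : (APset β φ M).ncard = M := by
  have : APset β φ M = ↑((Finset.range M).image fun i : ℕ => β + (i : ℤ) * φ) := by
    ext z
    simp [APset, Finset.mem_image, Finset.mem_range, eq_comm]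
  rw [this, Set.ncard_coe_finset, Finset.card_image_of_injective, Finset.card_range]
  intro i j hij
  simp only at hij
  have : (i : ℤ) = j := by
    have := mul_right_cancel₀ hφ.ne' (by linarith : (i : ℤ) * φ = (j : ℤ) * φ)
    exact this
  exact_mod_cast this
/-- Core covering lemma: if cosets `αα j mod dd j` (with `dd j ∣ g`, and none of
them containing `0 mod dd j`) cover all of `1..g-1` modulo `g`, then `g ≤ 2^r`. -/
lemma coset_cover : ∀ (g : ℕ), 0 < g → ∀ {ι : Type} (J : Finset ι) (dd αα : ι → ℤ),
    (∀ j ∈ J, 0 < dd j ∧ dd j ∣ (g : ℤ) ∧ ¬ dd j ∣ αα j) →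
    (∀ x : ℤ, 0 < x → x < (g : ℤ) → ∃ j ∈ J, dd j ∣ x - αα j) →
    g ≤ 2 ^ J.card := by
  intro g
  induction g using Nat.strong_induction_on with
  | _ g IH =>
  intro hg ι J dd αα hdd hcov
  classical
  rcases eq_or_lt_of_le (show 1 ≤ g from hg) with h1 | h2
  · rw [← h1]; exact Nat.one_le_two_pow
  -- 2 ≤ g
  set q := g.minFac with hqdef
  have hqp : q.Prime := Nat.minFac_prime (by omega)
  have hqg : q ∣ g := Nat.minFac_dvd g
  have hq2 : 2 ≤ q := hqp.two_le
  obtain ⟨j₁, hj₁J, hj₁⟩ := hcov 1 one_pos (by exact_mod_cast h2)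
  set gq := g / q with hgqdef
  have hgfac : q * gq = g := Nat.mul_div_cancel' hqg
  have hgq0 : 0 < gq := Nat.div_pos (Nat.minFac_le (by omega)) (by omega)
  have hgqlt : gq < g := Nat.div_lt_self (by omega) (by omega)
  set P : ι → Prop := fun j => ((q : ℤ) ∣ dd j) ∧ ¬ (q : ℤ) ∣ αα j with hPdef
  set Jl := J.filter P with hJldef
  set Js := J.filter (fun j => ¬ P j) with hJsdef
  -- master transformation for surviving classes
  have master : ∀ j : ι, ∃ d' α' : ℤ, j ∈ Js →
      (0 < d' ∧ d' ∣ (gq : ℤ) ∧ ¬ d' ∣ α' ∧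
        ∀ x : ℤ, dd j ∣ ((q : ℤ) * x - αα j) → d' ∣ x - α') := by
    intro j
    by_cases hjs : j ∈ Js
    swap
    · exact ⟨1, 0, fun h => absurd h hjs⟩
    have hjJ : j ∈ J := (Finset.mem_filter.mp hjs).1
    have hnP : ¬ P j := (Finset.mem_filter.mp hjs).2
    obtain ⟨hd0, hdg, hdα⟩ := hdd j hjJ
    by_cases hqd : (q : ℤ) ∣ dd j
    · have hqα : (q : ℤ) ∣ αα j := by
        by_contra h
        exact hnP ⟨hqd, h⟩
      obtain ⟨w, hw⟩ := hqd
      obtain ⟨A, hA⟩ := hqα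
      refine ⟨w, A, fun _ => ⟨?_, ?_, ?_, ?_⟩⟩
      · nlinarith [hw ▸ hd0]
      · have : (q : ℤ) * w ∣ (q : ℤ) * gq := by
          rw [← hw]
          convert hdg using 2
          exact_mod_cast hgfac
        exact (mul_dvd_mul_iff_left (by positivity : (q:ℤ) ≠ 0)).mp this
      · intro hcon
        exact hdα (by rw [hw, hA]; exact mul_dvd_mul_left _ hcon)
      · intro x hx
        rw [hw, hA] at hx
        have : (q : ℤ) * w ∣ (q : ℤ) * (x - A) := by
          convert hx using 1; ring
        exact (mul_dvd_mul_iff_left (by positivity : (q:ℤ) ≠ 0)).mp this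
    · -- coprime case
      have hco : IsCoprime ((q : ℤ)) (dd j) := by
        have h1 : (Int.gcd (q : ℤ) (dd j) : ℤ) ∣ (q : ℤ) := Int.gcd_dvd_left _ _
        have h2 : Int.gcd (q : ℤ) (dd j) ∣ q := by exact_mod_cast h1
        rcases (Nat.Prime.eq_one_or_self_of_dvd hqp _ h2) with h | h
        · exact Int.isCoprime_iff_gcd_eq_one.mpr h
        · exfalso
          apply hqd
          have := Int.gcd_dvd_right (a := (q : ℤ)) (b := dd j)
          rw [h] at this
          exact this
      obtain ⟨u, v, huv⟩ := hco
      refine ⟨dd j, u * αα j, fun _ => ⟨hd0, ?_, ?_, ?_⟩⟩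
      · have hco' : IsCoprime (dd j) ((q : ℤ)) := ⟨v, u, by linarith [huv]⟩
        apply hco'.dvd_of_dvd_mul_right (y := (gq : ℤ))
        have : ((g : ℕ) : ℤ) = (gq : ℤ) * (q : ℤ) := by
          push_cast [← hgfac]; ring
        rw [← this]; exact hdg
      · intro hcon
        apply hdα
        have key : αα j = (q : ℤ) * (u * αα j) + (v * αα j) * dd j := by
          linear_combination (-(αα j)) * huv
        rw [key]
        exact dvd_add (Dvd.dvd.mul_left hcon _) (dvd_mul_left _ _)
      · intro x hx
        have key : x - u * αα j = u * ((q : ℤ) * x - αα j) + (v * x) * dd j := by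
          linear_combination (-x) * huv
        rw [key]
        exact dvd_add (Dvd.dvd.mul_left hx _) (dvd_mul_left _ _)
  choose dd' αα' hmaster using master
  -- coverage for the reduced instance
  have hcov' : ∀ x : ℤ, 0 < x → x < (gq : ℤ) → ∃ j ∈ Js, dd' j ∣ x - αα' j := by
    intro x hx1 hx2
    have hqx1 : 0 < (q : ℤ) * x := by positivity
    have hqx2 : (q : ℤ) * x < (g : ℤ) := by
      have : (q : ℤ) * x < (q : ℤ) * gq := by
        apply mul_lt_mul_of_pos_left hx2 (by positivity)
      calc (q : ℤ) * x < (q : ℤ) * gq := this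
        _ = (g : ℤ) := by exact_mod_cast hgfac
    obtain ⟨j, hjJ, hjd⟩ := hcov _ hqx1 hqx2
    have hjs : j ∈ Js := by
      rw [hJsdef, Finset.mem_filter]
      refine ⟨hjJ, ?_⟩
      rintro ⟨hq1, hq2⟩
      apply hq2
      have : (q : ℤ) ∣ (q : ℤ) * x - ((q : ℤ) * x - αα j) := dvd_sub (dvd_mul_right _ _) (dvd_trans hq1 hjd)
      simpa using this
    exact ⟨j, hjs, (hmaster j hjs).2.2.2 x hjd⟩
  have hIH : gq ≤ 2 ^ Js.card := by
    refine IH gq hgqlt hgq0 Js dd' αα' ?_ hcov'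
    intro j hj
    obtain ⟨a1, a2, a3, _⟩ := hmaster j hj
    exact ⟨a1, a2, a3⟩
  -- lost classes: at least q - 1 of them
  have hlost : q - 1 ≤ Jl.card := by
    set v := g.factorization q with hvdef
    set W := g / q ^ v with hWdef
    have hgne : g ≠ 0 := by omega
    have hv1 : 1 ≤ v := hqp.factorization_pos_of_dvd hgne hqg
    have hW0 : 0 < W := Nat.ordCompl_pos q hgne
    have hWq : ¬ q ∣ W := Nat.not_dvd_ordCompl hqp hgne
    have hfac : q ^ v * W = g := Nat.ordProj_mul_ordCompl_eq_self g q
    have hqv : q ≤ q ^ v := by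
      calc q = q ^ 1 := (pow_one q).symm
        _ ≤ q ^ v := Nat.pow_le_pow_right (by omega) hv1
    have exj : ∀ s : ℕ, ∃ j, (1 ≤ s ∧ s < q) →
        (j ∈ J ∧ dd j ∣ ((W * s : ℕ) : ℤ) - αα j) := by
      intro s
      by_cases hs : 1 ≤ s ∧ s < q
      · have hlt : W * s < g := by
          calc W * s < W * q := by nlinarith [hW0, hs.2]
            _ ≤ W * q ^ v := Nat.mul_le_mul_left W hqv
            _ = g := by rw [← hfac]; ring
        have hpos : 0 < ((W * s : ℕ) : ℤ) := by
          have : 0 < W * s := Nat.mul_pos hW0 hs.1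
          exact_mod_cast this
        obtain ⟨j, hj, hd⟩ := hcov _ hpos (by exact_mod_cast hlt)
        exact ⟨j, fun _ => ⟨hj, hd⟩⟩
      · exact ⟨j₁, fun h => absurd h hs⟩
    choose sf hsf using exj
    have hmaps : ∀ s ∈ Finset.Ico 1 q, sf s ∈ Jl := by
      intro s hs
      rw [Finset.mem_Ico] at hs
      obtain ⟨hjJ, hjd⟩ := hsf s hs
      obtain ⟨hd0, hdg, hdα⟩ := hdd _ hjJ
      have hqdd : (q : ℤ) ∣ dd (sf s) := by
        by_contra hqd
        have hco : IsCoprime (dd (sf s)) ((q : ℤ)) := by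
          have h1 : (Int.gcd (q : ℤ) (dd (sf s)) : ℤ) ∣ (q : ℤ) := Int.gcd_dvd_left _ _
          have h2 : Int.gcd (q : ℤ) (dd (sf s)) ∣ q := by exact_mod_cast h1
          rcases (Nat.Prime.eq_one_or_self_of_dvd hqp _ h2) with h | h
          · exact (Int.isCoprime_iff_gcd_eq_one.mpr h).symm
          · exfalso
            apply hqd
            have := Int.gcd_dvd_right (a := (q : ℤ)) (b := dd (sf s))
            rw [h] at this
            exact this
        have hcop : IsCoprime (dd (sf s)) (((q : ℤ)) ^ v) := hco.pow_right
        have hdW : dd (sf s) ∣ (W : ℤ) := by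
          apply hcop.dvd_of_dvd_mul_right
          have : ((W : ℤ)) * ((q : ℤ)) ^ v = ((g : ℕ) : ℤ) := by
            push_cast [← hfac]; ring
          rw [this]; exact hdg
        apply hdα
        have hdWs : dd (sf s) ∣ ((W * s : ℕ) : ℤ) := by
          push_cast
          exact Dvd.dvd.mul_right hdW _
        have := dvd_sub hdWs hjd
        simpa using this
      have hqαα : ¬ (q : ℤ) ∣ αα (sf s) := by
        intro hqa
        have hqWs : (q : ℤ) ∣ ((W * s : ℕ) : ℤ) := by
          have h1 : (q : ℤ) ∣ ((W * s : ℕ) : ℤ) - αα (sf s) := dvd_trans hqdd hjd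
          have := dvd_add h1 hqa
          simpa using this
        have hqWs' : q ∣ W * s := by exact_mod_cast hqWs
        rcases (Nat.Prime.dvd_mul hqp).mp hqWs' with h | h
        · exact hWq h
        · have := Nat.le_of_dvd (by omega) h
          omega
      rw [hJldef, Finset.mem_filter]
      exact ⟨hjJ, hqdd, hqαα⟩
    have hinj : Set.InjOn sf ↑(Finset.Ico 1 q) := by
      intro s hs s' hs' hss
      simp only [Finset.coe_Ico, Set.mem_Ico] at hs hs'
      obtain ⟨hjJ, hjd⟩ := hsf s hs
      obtain ⟨hjJ', hjd'⟩ := hsf s' hs'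
      rw [hss] at hjd
      have hqdd : (q : ℤ) ∣ dd (sf s') := by
        have := hmaps s' (by rw [Finset.mem_Ico]; exact hs')
        rw [hJldef, Finset.mem_filter] at this
        exact this.2.1
      have hdiff : (q : ℤ) ∣ ((W : ℤ)) * ((s : ℤ) - (s' : ℤ)) := by
        have h1 := dvd_sub hjd hjd'
        have h2 : ((W * s : ℕ) : ℤ) - αα (sf s') - (((W * s' : ℕ) : ℤ) - αα (sf s')) =
            ((W : ℤ)) * ((s : ℤ) - (s' : ℤ)) := by push_cast; ring
        rw [h2] at h1
        exact dvd_trans hqdd h1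
      have hqprime : Prime ((q : ℤ)) := Nat.prime_iff_prime_int.mp hqp
      rcases hqprime.dvd_mul.mp hdiff with h | h
      · exfalso; exact hWq (by exact_mod_cast h)
      · have h0 : ((s : ℤ) - (s' : ℤ)) = 0 := by
          apply Int.eq_zero_of_abs_lt_dvd h
          rw [abs_lt]
          constructor
          · have : (1 : ℤ) ≤ s := by exact_mod_cast hs.1
            have : (s' : ℤ) < q := by exact_mod_cast hs'.2
            omega
          · have : (1 : ℤ) ≤ s' := by exact_mod_cast hs'.1
            have : (s : ℤ) < q := by exact_mod_cast hs.2
            omega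
        have : (s : ℤ) = (s' : ℤ) := by omega
        exact_mod_cast this
    have := Finset.card_le_card_of_injOn sf hmaps hinj
    rw [Nat.card_Ico] at this
    exact this
  -- combine
  have hdisj : Disjoint Js Jl := by
    rw [Finset.disjoint_left]
    intro j hj hj'
    exact (Finset.mem_filter.mp hj).2 (Finset.mem_filter.mp hj').2
  have hsum : Js.card + Jl.card ≤ J.card := by
    rw [← Finset.card_union_of_disjoint hdisj]
    apply Finset.card_le_card
    intro j hj
    rcases Finset.mem_union.mp hj with h | h
    · exact (Finset.mem_filter.mp h).1
    · exact (Finset.mem_filter.mp h).1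
  have hq2pow : q ≤ 2 ^ (q - 1) := by
    have := Nat.lt_two_pow_self (n := q - 1)
    omega
  calc g = q * gq := hgfac.symm
    _ ≤ 2 ^ (q - 1) * 2 ^ Js.card := Nat.mul_le_mul hq2pow hIH
    _ = 2 ^ (q - 1 + Js.card) := (pow_add 2 _ _).symm
    _ ≤ 2 ^ (Jl.card + Js.card) := Nat.pow_le_pow_right (by omega) (by omega)
    _ ≤ 2 ^ J.card := Nat.pow_le_pow_right (by omega) (by omega)
lemma int_pos_of_mul_pos_left {c x : ℤ} (hc : 0 < c) (h : 0 < c * x) : 0 < x := by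
  nlinarith

/-- Engine: if an AP class (disjoint from the multiples `t*g`, `t ≤ n`) contains
two points at the same offset `ρ` modulo `g`, then `gcd(φ, g)` does not divide `ρ`. -/
lemma engine {g : ℤ} (hg : 0 < g) (n : ℕ) {β φ : ℤ} (hφ : 0 < φ) {L : ℕ}
    (hA : ∀ t : ℕ, t ≤ n → ((t : ℤ) * g) ∉ APset β φ L)
    {ρ : ℤ} (hρ1 : 0 < ρ) (hρ2 : ρ < g) {t t' : ℕ} (htt : t < t') (htn : t' < n)
    (h1 : ρ + (t : ℤ) * g ∈ APset β φ L) (h2 : ρ + (t' : ℤ) * g ∈ APset β φ L) :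
    ¬ ((Int.gcd φ g : ℤ) ∣ ρ) := by
  intro heρ
  have hgcd0 : 0 < Int.gcd φ g := Int.gcd_pos_of_ne_zero_left g hφ.ne'
  have he0 : (0 : ℤ) < (Int.gcd φ g : ℤ) := Int.natCast_pos.mpr hgcd0
  obtain ⟨φ', hφe⟩ : ((Int.gcd φ g : ℤ)) ∣ φ := Int.gcd_dvd_left _ _
  obtain ⟨g', hge⟩ : ((Int.gcd φ g : ℤ)) ∣ g := Int.gcd_dvd_right _ _
  obtain ⟨ρ', hρe⟩ := heρ
  have hφ'0 : 0 < φ' := int_pos_of_mul_pos_left he0 (hφe ▸ hφ)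
  have hg'0 : 0 < g' := int_pos_of_mul_pos_left he0 (hge ▸ hg)
  have hρ'0 : 0 < ρ' := int_pos_of_mul_pos_left he0 (hρe ▸ hρ1)
  have hcop : IsCoprime φ' g' := by
    have e1 : φ / (Int.gcd φ g : ℤ) = φ' := by
      nth_rewrite 1 [hφe]; exact Int.mul_ediv_cancel_left _ he0.ne'
    have e2 : g / (Int.gcd φ g : ℤ) = g' := by
      nth_rewrite 1 [hge]; exact Int.mul_ediv_cancel_left _ he0.ne'
    have := Int.gcd_div_gcd_div_gcd (i := φ) (j := g) hgcd0
    rw [e1, e2] at this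
    exact Int.isCoprime_iff_gcd_eq_one.mpr this
  obtain ⟨i₁, hi₁L, hv₁⟩ := h1
  obtain ⟨i₂, hi₂L, hv₂⟩ := h2
  have hkey : ((i₂ : ℤ) - (i₁ : ℤ)) * φ = ((t' : ℤ) - (t : ℤ)) * g := by
    linear_combination hv₁ - hv₂
  have hΔ0 : (0 : ℤ) < (t' : ℤ) - (t : ℤ) := by
    have : (t:ℤ) < t' := by exact_mod_cast htt
    omega
  have hI0 : (0 : ℤ) < (i₂ : ℤ) - (i₁ : ℤ) := by
    apply int_pos_of_mul_pos_left hφ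
    have h1 : 0 < ((t' : ℤ) - (t : ℤ)) * g := mul_pos hΔ0 hg
    have h2 := mul_comm ((i₂ : ℤ) - (i₁ : ℤ)) φ
    linarith [hkey]
  have hkey' : ((i₂ : ℤ) - (i₁ : ℤ)) * φ' = ((t' : ℤ) - (t : ℤ)) * g' := by
    apply mul_left_cancel₀ he0.ne'
    linear_combination hkey - ((i₂:ℤ)-(i₁:ℤ)) * hφe + ((t':ℤ)-(t:ℤ)) * hge
  have hφ'Δ : φ' ∣ ((t' : ℤ) - (t : ℤ)) := by
    apply hcop.dvd_of_dvd_mul_right (y := ((t' : ℤ) - (t : ℤ)))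
    exact ⟨(i₂ : ℤ) - (i₁ : ℤ), by linarith [hkey']⟩
  have hφ'leΔ : φ' ≤ (t' : ℤ) - (t : ℤ) := Int.le_of_dvd hΔ0 hφ'Δ
  obtain ⟨u, v, huv⟩ := hcop
  obtain ⟨m₀, D, hm₀0, hm₀lt, hmod⟩ :
      ∃ m₀ D : ℤ, 0 ≤ m₀ ∧ m₀ < g' ∧ g' * D + m₀ = ρ' * u :=
    ⟨(ρ'*u) % g', (ρ'*u)/g', Int.emod_nonneg _ hg'0.ne', Int.emod_lt_of_pos _ hg'0,
      Int.mul_ediv_add_emod _ _⟩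
  have hdvd : ρ' + (g' - m₀) * φ' = g' * (ρ' * v + φ' + D * φ') := by
    linear_combination (-φ') * hmod + (-ρ') * huv
  have ht₀φ : 0 < (g' - m₀) * φ' := mul_pos (by omega) hφ'0
  have hK1 : 1 ≤ ρ' * v + φ' + D * φ' := by
    rcases le_or_gt (ρ' * v + φ' + D * φ') 0 with h | h
    · exfalso
      have h1 : g' * (ρ' * v + φ' + D * φ') ≤ 0 :=
        mul_nonpos_of_nonneg_of_nonpos hg'0.le h
      linarith
    · omega
  have hVval : β + ((i₁ : ℤ) + (g' - m₀)) * φ =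
      ((t : ℤ) + (ρ' * v + φ' + D * φ')) * g := by
    linear_combination (-1) * hv₁ + hρe + (g'-m₀) * hφe
      - (ρ'*v+φ'+D*φ') * hge + ((Int.gcd φ g : ℤ)) * hdvd
  have ht₀I : g' - m₀ ≤ (i₂ : ℤ) - (i₁ : ℤ) := by
    have h1 : (g' - m₀) * φ' ≤ g' * φ' :=
      mul_le_mul_of_nonneg_right (by omega) hφ'0.le
    have h2 : g' * φ' ≤ ((t' : ℤ) - (t : ℤ)) * g' := by
      rw [mul_comm]; exact mul_le_mul_of_nonneg_right hφ'leΔ hg'0.le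
    exact le_of_mul_le_mul_right (by linarith [hkey']) hφ'0
  have hi₃L : i₁ + (g' - m₀).toNat < L := by omega
  have hsn : (t : ℤ) + (ρ' * v + φ' + D * φ') < (n : ℤ) := by
    have hV1 : ((t : ℤ) + (ρ' * v + φ' + D * φ')) * g ≤ ρ + (t' : ℤ) * g := by
      have h3 : β + ((i₁ : ℤ) + (g' - m₀)) * φ ≤ β + (i₂ : ℤ) * φ := by
        have := mul_le_mul_of_nonneg_right
          (show (i₁ : ℤ) + (g' - m₀) ≤ (i₂ : ℤ) by linarith) hφ.le
        linarith
      rw [hVval] at h3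
      rw [← hv₂] at h3
      exact h3
    have hV2 : ρ + (t' : ℤ) * g < ((t' : ℤ) + 1) * g := by
      have : ((t' : ℤ) + 1) * g = (t' : ℤ) * g + g := by ring
      linarith
    have h4 : ((t : ℤ) + (ρ' * v + φ' + D * φ')) * g < ((t' : ℤ) + 1) * g := by linarith
    have h5 : (t : ℤ) + (ρ' * v + φ' + D * φ') < (t' : ℤ) + 1 :=
      lt_of_mul_lt_mul_right h4 hg.le
    have h6 : (t' : ℤ) + 1 ≤ (n : ℤ) := by exact_mod_cast htn
    linarith
  apply hA ((t : ℕ) + (ρ' * v + φ' + D * φ').toNat) (by omega)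
  refine ⟨i₁ + (g' - m₀).toNat, hi₃L, ?_⟩
  have hc1 : ((t + (ρ' * v + φ' + D * φ').toNat : ℕ) : ℤ) =
      (t : ℤ) + (ρ' * v + φ' + D * φ') := by
    push_cast [Int.toNat_of_nonneg (by omega : (0:ℤ) ≤ ρ' * v + φ' + D * φ')]; ring
  have hc2 : ((i₁ + (g' - m₀).toNat : ℕ) : ℤ) = (i₁ : ℤ) + (g' - m₀) := by
    push_cast [Int.toNat_of_nonneg (by omega : (0:ℤ) ≤ g' - m₀)]; ring
  rw [hc1, hc2, hVval]
/-- Window lemma: an AP of `n+1` points spaced `g` (the multiples `t*g`),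
whose `n` gaps are covered by at most `r` AP classes avoiding the points,
forces `g ≤ 2^r`. -/
lemma window {g : ℤ} (hg : 0 < g) {n r : ℕ} (hnr : r + 1 ≤ n) {ι : Type}
    (J : Finset ι) (hJ : J.card ≤ r) (C : ι → Set ℤ)
    (hC : ∀ j ∈ J, ∃ β φ : ℤ, ∃ L : ℕ, 0 < φ ∧ C j = APset β φ L)
    (hA : ∀ j ∈ J, ∀ t : ℕ, t ≤ n → ((t : ℤ) * g) ∉ C j)
    (hcov : ∀ ρ : ℤ, 0 < ρ → ρ < g → ∀ t : ℕ, t < n → ∃ j ∈ J, (ρ + (t : ℤ) * g) ∈ C j) :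
    g ≤ 2 ^ r := by
  classical
  have h2r : (1 : ℤ) ≤ 2 ^ r := one_le_pow₀ (by norm_num)
  rcases le_or_gt g 1 with hg1 | hg2
  · linarith
  -- normalize the classes
  have hCtot : ∀ j : ι, ∃ β φ : ℤ, ∃ L : ℕ, 0 < φ ∧ (j ∈ J → C j = APset β φ L) := by
    intro j
    by_cases hj : j ∈ J
    · obtain ⟨β, φ, L, h1, h2⟩ := hC j hj
      exact ⟨β, φ, L, h1, fun _ => h2⟩
    · exact ⟨0, 1, 0, one_pos, fun h => absurd h hj⟩
  choose β φ Lf hφ hrep using hCtot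
  obtain ⟨j₀, hj₀, _⟩ := hcov 1 one_pos hg2 0 (by omega)
  -- for every offset ρ there is a class whose gcd-coset contains ρ but not 0
  have key : ∀ ρ : ℤ, ∃ j : ι, (0 < ρ ∧ ρ < g) →
      (j ∈ J ∧ ((Int.gcd (φ j) g : ℤ) ∣ ρ - β j) ∧
        ¬ ((Int.gcd (φ j) g : ℤ) ∣ ρ)) := by
    intro ρ
    by_cases hρ : 0 < ρ ∧ ρ < g
    swap
    · exact ⟨j₀, fun h => absurd h hρ⟩
    obtain ⟨hρ1, hρ2⟩ := hρ
    have hct : ∀ t : ℕ, ∃ j, t < n → (j ∈ J ∧ (ρ + (t : ℤ) * g) ∈ C j) := by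
      intro t
      by_cases ht : t < n
      · obtain ⟨j, hj, hm⟩ := hcov ρ hρ1 hρ2 t ht
        exact ⟨j, fun _ => ⟨hj, hm⟩⟩
      · exact ⟨j₀, fun h => absurd h ht⟩
    choose cf hcf using hct
    have hmapsto : ∀ t ∈ Finset.range n, cf t ∈ J := fun t ht =>
      (hcf t (Finset.mem_range.mp ht)).1
    have hcard : J.card < (Finset.range n).card := by
      rw [Finset.card_range]; omega
    obtain ⟨t, ht, t', ht', htne, hteq⟩ :=
      Finset.exists_ne_map_eq_of_card_lt_of_maps_to hcard hmapsto
    rw [Finset.mem_range] at ht ht'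
    -- make t < t'
    obtain ⟨a, b, hab, hbn, hja, hjb, hjeq⟩ :
        ∃ a b : ℕ, a < b ∧ b < n ∧ cf a ∈ J ∧ cf a = cf b ∧ cf a = cf t := by
      rcases Ne.lt_or_gt htne with h | h
      · exact ⟨t, t', h, ht', (hcf t ht).1, hteq, rfl⟩
      · exact ⟨t', t, h, ht, (hcf t' ht').1, hteq.symm, hteq.symm⟩
    set j := cf a with hjdef
    have hmem1 : (ρ + (a : ℤ) * g) ∈ C j := (hcf a (by omega)).2
    have hmem2 : (ρ + (b : ℤ) * g) ∈ C j := by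
      rw [hjb]
      exact (hcf b hbn).2
    have hrepj : C j = APset (β j) (φ j) (Lf j) := hrep j hja
    rw [hrepj] at hmem1 hmem2
    have hAj : ∀ s : ℕ, s ≤ n → ((s : ℤ) * g) ∉ APset (β j) (φ j) (Lf j) := by
      intro s hs
      rw [← hrepj]
      exact hA j hja s hs
    have hengine := engine hg n (hφ j) hAj hρ1 hρ2 hab hbn hmem1 hmem2
    refine ⟨j, fun _ => ⟨hja, ?_, hengine⟩⟩
    obtain ⟨i, hiL, hiv⟩ := hmem1
    have h1 : ρ - β j = (i : ℤ) * φ j - (a : ℤ) * g := by linarith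
    rw [h1]
    exact dvd_sub (Dvd.dvd.mul_left (Int.gcd_dvd_left _ _) _) (Dvd.dvd.mul_left (Int.gcd_dvd_right _ _) _)
  choose jch hjch using key
  set J' := (Finset.Ico (1 : ℤ) g).image jch with hJ'def
  have hJ'sub : J' ⊆ J := by
    intro j hj
    rw [hJ'def, Finset.mem_image] at hj
    obtain ⟨ρ, hρ, rfl⟩ := hj
    rw [Finset.mem_Ico] at hρ
    exact (hjch ρ ⟨by omega, hρ.2⟩).1
  have happ : g.toNat ≤ 2 ^ J'.card := by
    apply coset_cover g.toNat (by omega) J'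
      (fun j => (Int.gcd (φ j) g : ℤ)) β
    · intro j hj
      rw [hJ'def, Finset.mem_image] at hj
      obtain ⟨ρ, hρ, rfl⟩ := hj
      rw [Finset.mem_Ico] at hρ
      obtain ⟨hjJ, hdvd, hndvd⟩ := hjch ρ ⟨by omega, hρ.2⟩
      refine ⟨?_, ?_, ?_⟩
      · exact Int.natCast_pos.mpr (Int.gcd_pos_of_ne_zero_left g (hφ _).ne')
      · have : ((g.toNat : ℕ) : ℤ) = g := Int.toNat_of_nonneg hg.le
        rw [this]
        exact Int.gcd_dvd_right _ _
      · intro hcon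
        apply hndvd
        have h3 := dvd_add hdvd hcon
        simpa using h3
    · intro x hx1 hx2
      have hxg : x < g := by
        have : ((g.toNat : ℕ) : ℤ) = g := Int.toNat_of_nonneg hg.le
        omega
      obtain ⟨hjJ, hdvd, _⟩ := hjch x ⟨hx1, hxg⟩
      refine ⟨jch x, ?_, hdvd⟩
      rw [hJ'def, Finset.mem_image]
      exact ⟨x, by rw [Finset.mem_Ico]; omega, rfl⟩
  have hcard' : J'.card ≤ r := le_trans (Finset.card_le_card hJ'sub) hJ
  have : g.toNat ≤ 2 ^ r := le_trans happ (Nat.pow_le_pow_right (by omega) hcard')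
  have h2 : ((2 ^ r : ℕ) : ℤ) = 2 ^ r := by push_cast; ring
  omega
theorem xcap_structural_lemma (k : ℕ) (hk : 1 ≤ k) (s : Fin k → Set ℤ)
    (hAP : ∀ i : Fin k, IsFinAP (s i))
    (hdisj : ∀ i j : Fin k, i ≠ j → Disjoint (s i) (s j))
    (X : Set ℤ) (hX : X = ⋃ i, s i)
    (S : Set ℤ) (hS : IsFinAP S) (hsub : S ⊆ X)
    (i : Fin k) (hbig : k + 1 ≤ (S ∩ s i).ncard)
    (x y : ℤ) (hx : x ∈ S ∩ s i) (hy : y ∈ S ∩ s i) (hxy : x < y)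
    (hcons : ∀ z ∈ S ∩ s i, ¬(x < z ∧ z < y)) :
    {z ∈ S | x < z ∧ z < y}.ncard ≤ 2 ^ (k - 1) - 1 := by
  classical
  obtain ⟨a, d, m, hd, hm1, hSrep⟩ := isFinAP_norm hS
  subst hSrep
  subst hX
  -- normalize t_i = S ∩ s i
  have hTne : (APset a d m ∩ s i).Nonempty := by
    by_contra h
    rw [Set.not_nonempty_iff_eq_empty] at h
    rw [h, Set.ncard_empty] at hbig
    omega
  obtain ⟨x₀, δ, M, hδ0, hddvd, hM1, hTrep⟩ := inter_AP_norm hd (hAP i) hTne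
  have hMcard : M = (APset a d m ∩ s i).ncard := by
    rw [hTrep, ncard_APset hδ0]
  have hMk : k + 1 ≤ M := by omega
  -- x and y are consecutive, so y = x + δ
  have hxT := hx; have hyT := hy
  rw [hTrep] at hxT hyT
  obtain ⟨u₁, hu₁M, hu₁v⟩ := hxT
  obtain ⟨u₂, hu₂M, hu₂v⟩ := hyT
  have hu12 : (u₁ : ℤ) < (u₂ : ℤ) := by
    by_contra h
    push_neg at h
    have : (u₂ : ℤ) * δ ≤ (u₁ : ℤ) * δ := mul_le_mul_of_nonneg_right h hδ0.le
    omega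
  have hsucc : (u₂ : ℤ) = (u₁ : ℤ) + 1 := by
    by_contra h
    have h2 : (u₁ : ℤ) + 1 < (u₂ : ℤ) := by omega
    have hu' : u₁ + 1 < M := by
      have : (u₂ : ℤ) < M := by exact_mod_cast hu₂M
      omega
    have hz : x₀ + ((u₁ + 1 : ℕ) : ℤ) * δ ∈ APset a d m ∩ s i := by
      rw [hTrep]; exact ⟨u₁ + 1, hu', rfl⟩
    apply hcons _ hz
    constructor
    · rw [hu₁v]
      push_cast
      have : ((u₁ : ℤ) + 1) * δ = (u₁ : ℤ) * δ + δ := by ring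
      linarith
    · rw [hu₂v]
      push_cast
      have : ((u₁ : ℤ) + 1) * δ < (u₂ : ℤ) * δ := by
        apply mul_lt_mul_of_pos_right h2 hδ0
      linarith
  have hyx : y = x + δ := by
    rw [hu₁v, hu₂v, hsucc]; ring
  -- δ = d * gz
  obtain ⟨gz, hgz⟩ := hddvd
  have hgz0 : 0 < gz := int_pos_of_mul_pos_left hd (hgz ▸ hδ0)
  -- membership characterizations for x, y
  have hxS := (mem_APset_iff hd).mp hx.1
  have hyS := (mem_APset_iff hd).mp hy.1
  obtain ⟨⟨cx, hcx⟩, hax, hxm⟩ := hxS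
  obtain ⟨_, hay, hym⟩ := hyS
  -- the gap set
  have hgap : {z ∈ APset a d m | x < z ∧ z < y} =
      ↑((Finset.Ico (1 : ℤ) gz).image (fun c => x + c * d)) := by
    ext z
    simp only [Set.mem_setOf_eq, Finset.coe_image, Set.mem_image, Finset.coe_Ico,
      Set.mem_Ico]
    constructor
    · rintro ⟨hzS, hxz, hzy⟩
      have hz' := (mem_APset_iff hd).mp hzS
      obtain ⟨⟨cz, hcz⟩, _, _⟩ := hz'
      refine ⟨cz - cx, ⟨?_, ?_⟩, ?_⟩
      · -- 1 ≤ cz - cx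
        have h1 : z - x = (cz - cx) * d := by
          have : z - x = (z - a) - (x - a) := by ring
          rw [this, hcz, hcx]; ring
        nlinarith
      · -- cz - cx < gz
        have h1 : z - x = (cz - cx) * d := by
          have : z - x = (z - a) - (x - a) := by ring
          rw [this, hcz, hcx]; ring
        have h2 : z - x < gz * d := by
          rw [hyx, hgz] at hzy
          linarith [hzy]
        nlinarith
      · have : z - x = (cz - cx) * d := by
          have : z - x = (z - a) - (x - a) := by ring
          rw [this, hcz, hcx]; ring
        linarith
    · rintro ⟨c, ⟨hc1, hc2⟩, rfl⟩
      have hcd : 0 < c * d := mul_pos (by omega) hd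
      have hcdu : c * d < gz * d := mul_lt_mul_of_pos_right hc2 hd
      refine ⟨?_, by linarith, by rw [hyx, hgz]; linarith⟩
      rw [mem_APset_iff hd]
      refine ⟨?_, by linarith, ?_⟩
      · have : x + c * d - a = (x - a) + c * d := by ring
        rw [this, hcx]
        exact dvd_add ⟨cx, by ring⟩ ⟨c, by ring⟩
      · have : x + c * d < y := by rw [hyx, hgz]; linarith
        linarith
  -- window lemma gives gz ≤ 2^(k-1)
  have hwin : gz ≤ (2 : ℤ) ^ (k - 1) := by
    apply window hgz0 (n := M - 1) (r := k - 1) (by omega) (Finset.univ.erase i)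
      (by
        rw [Finset.card_erase_of_mem (Finset.mem_univ i), Finset.card_univ,
          Fintype.card_fin])
      (fun j => {u : ℤ | x₀ + u * d ∈ APset a d m ∩ s j})
    · -- hC
      intro j hj
      rcases Set.eq_empty_or_nonempty (APset a d m ∩ s j) with hE | hne'
      · refine ⟨0, 1, 0, one_pos, ?_⟩
        ext u
        constructor
        · intro h
          rw [Set.mem_setOf_eq, hE] at h
          exact absurd h (Set.notMem_empty _)
        · rintro ⟨w, hw0, _⟩
          omega
      · obtain ⟨b, ψ, l, hψ0, hdψ, hl1, hrepj⟩ := inter_AP_norm hd (hAP j) hne'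
        have hbmem : b ∈ APset a d m ∩ s j := by
          rw [hrepj]; exact ⟨0, by omega, by simp⟩
        have hbS := (mem_APset_iff hd).mp hbmem.1
        obtain ⟨⟨cb, hcb⟩, _, _⟩ := hbS
        have hx₀mem : x₀ ∈ APset a d m ∩ s i := by
          rw [hTrep]; exact ⟨0, by omega, by simp⟩
        have hx₀S := (mem_APset_iff hd).mp hx₀mem.1
        obtain ⟨⟨c₀, hc₀⟩, _, _⟩ := hx₀S
        obtain ⟨ψq, hψq⟩ := hdψ
        have hψq0 : 0 < ψq := int_pos_of_mul_pos_left hd (hψq ▸ hψ0)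
        refine ⟨cb - c₀, ψq, l, hψq0, ?_⟩
        ext u
        simp only [Set.mem_setOf_eq]
        rw [hrepj]
        constructor
        · rintro ⟨w, hwl, hwv⟩
          refine ⟨w, hwl, ?_⟩
          apply mul_left_cancel₀ hd.ne'
          have hb' : b = a + cb * d := by linarith
          have hx₀' : x₀ = a + c₀ * d := by linarith
          rw [hb', hx₀'] at hwv
          rw [hψq] at hwv
          linarith [hwv]
        · rintro ⟨w, hwl, hwv⟩
          refine ⟨w, hwl, ?_⟩
          have hb' : b = a + cb * d := by linarith
          have hx₀' : x₀ = a + c₀ * d := by linarith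
          rw [hb', hx₀', hψq]
          rw [hwv]
          ring
    · -- hA
      intro j hj t ht
      simp only [Set.mem_setOf_eq]
      intro hmem
      have hji : j ≠ i := (Finset.mem_erase.mp hj).1
      have hti : x₀ + ((t : ℤ) * gz) * d ∈ APset a d m ∩ s i := by
        rw [hTrep]
        refine ⟨t, by omega, ?_⟩
        rw [hgz]; ring
      exact Set.disjoint_left.mp (hdisj j i hji) hmem.2 hti.2
    · -- hcov
      intro ρ hρ1 hρ2 t ht
      obtain ⟨u, hudef⟩ : ∃ u : ℤ, u = ρ + (t : ℤ) * gz := ⟨_, rfl⟩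
      rw [← hudef]
      have hu0 : 0 < u := by
        rw [hudef]
        have := mul_nonneg (by positivity : (0:ℤ) ≤ (t : ℤ)) hgz0.le
        linarith
      have hutop : u < ((M : ℤ) - 1) * gz := by
        have h1 : (t : ℤ) ≤ (M : ℤ) - 2 := by omega
        have h2 : (t : ℤ) * gz ≤ ((M : ℤ) - 2) * gz :=
          mul_le_mul_of_nonneg_right h1 hgz0.le
        have h3 : ((M : ℤ) - 2) * gz + gz = ((M : ℤ) - 1) * gz := by ring
        rw [hudef]
        linarith
      have htopmem : x₀ + ((M : ℤ) - 1) * δ ∈ APset a d m ∩ s i := by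
        rw [hTrep]
        refine ⟨M - 1, by omega, ?_⟩
        congr 1
        have : ((M - 1 : ℕ) : ℤ) = (M : ℤ) - 1 := by omega
        rw [this]
      have htopS := (mem_APset_iff hd).mp htopmem.1
      have hzS : x₀ + u * d ∈ APset a d m := by
        rw [mem_APset_iff hd]
        have hx₀mem : x₀ ∈ APset a d m ∩ s i := by
          rw [hTrep]; exact ⟨0, by omega, by simp⟩
        have hx₀S := (mem_APset_iff hd).mp hx₀mem.1
        obtain ⟨⟨c₀, hc₀⟩, hax₀, _⟩ := hx₀S
        refine ⟨?_, ?_, ?_⟩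
        · have : x₀ + u * d - a = (x₀ - a) + u * d := by ring
          rw [this, hc₀]
          exact dvd_add ⟨c₀, by ring⟩ ⟨u, by ring⟩
        · have : 0 < u * d := mul_pos hu0 hd
          linarith
        · have h4 : u * d < (((M : ℤ) - 1) * gz) * d := mul_lt_mul_of_pos_right hutop hd
          have h5 : (((M : ℤ) - 1) * gz) * d = ((M : ℤ) - 1) * δ := by rw [hgz]; ring
          obtain ⟨_, _, htople⟩ := htopS
          linarith
      have hzX : x₀ + u * d ∈ ⋃ j, s j := hsub hzS
      obtain ⟨j, hjmem⟩ := Set.mem_iUnion.mp hzX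
      have hji : j ≠ i := by
        intro h
        subst h
        have : x₀ + u * d ∈ APset a d m ∩ s j := ⟨hzS, hjmem⟩
        rw [hTrep] at this
        obtain ⟨w, hwM, hwv⟩ := this
        have hud : u * d = (w : ℤ) * δ := by linarith
        rw [hgz] at hud
        have hu' : u = (w : ℤ) * gz := by
          apply mul_right_cancel₀ hd.ne'
          linear_combination hud
        -- 0 < ρ < gz and ρ = (w - t) * gz : contradiction
        have hρeq : ρ = ((w : ℤ) - (t : ℤ)) * gz := by
          rw [hudef] at hu'
          linear_combination hu'
        rcases le_or_gt ((w : ℤ) - (t : ℤ)) 0 with hc | hc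
        · have : ((w : ℤ) - (t : ℤ)) * gz ≤ 0 := mul_nonpos_of_nonpos_of_nonneg hc hgz0.le
          linarith
        · have h6 : (1 : ℤ) ≤ (w : ℤ) - (t : ℤ) := by omega
          have : (1 : ℤ) * gz ≤ ((w : ℤ) - (t : ℤ)) * gz :=
            mul_le_mul_of_nonneg_right h6 hgz0.le
          linarith
      refine ⟨j, Finset.mem_erase.mpr ⟨hji, Finset.mem_univ j⟩, ?_⟩
      simp only [Set.mem_setOf_eq]
      exact ⟨hzS, hjmem⟩
  -- conclude
  rw [hgap, Set.ncard_coe_finset]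
  rw [Finset.card_image_of_injective _ (fun c c' hcc => by
    have : c * d = c' * d := by linarith [hcc]
    exact mul_right_cancel₀ hd.ne' this)]
  rw [Int.card_Ico]
  have hcast : ((2 ^ (k - 1) : ℕ) : ℤ) = (2 : ℤ) ^ (k - 1) := by push_cast; ring
  omega
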